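/- Lipschitz parameterization of Gradient Bandit: Let ε ∈ (0, 1), R > 0, T_ε = min( ⌊ log(√(1/(Kε))) · √n / R ⌋, n ), and L_ε = (√2 / (R ε)) · log(√(1/(Kε))) / √(Kε). Then for all parameters θ, δ ∈ [0, R] and all t ≤ T_ε, sup_{a ∈ [K]} | log( π_t^δ(a) / π_t^θ(a) ) | ≤ L_ε |δ − θ|, where both probability sequences are computed from the same sequences of rewards in [0,1] and actions in [K]. -/

import Mathlib

/-- Softmax distribution associated with a score vector. -/
noncomputable def softmax {ι : Type*} [Fintype ι] (h : ι → ℝ) (a : ι) : ℝ :=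
  Real.exp (h a) / ∑ b, Real.exp (h b)

/-- Cumulative estimated rewards `G t b = Σ_{s=1}^t ĝ_{b,s}` of the
`Gradient Bandit` algorithm with learning rate `θ/√n`, where
`ĝ_{b,s} = (1{A_s = b} − π_s(b)) g_{A_s,s}`. -/
noncomputable def gradBanditG (n K : ℕ) (g : Fin K → ℕ → ℝ) (A : ℕ → Fin K)
    (θ : ℝ) : ℕ → Fin K → ℝ
  | 0 => fun _ => 0
  | (t + 1) => fun b =>
      gradBanditG n K g A θ t b +
        ((if A (t + 1) = b then 1 else 0) -
            softmax (fun c => -(θ / Real.sqrt n) * gradBanditG n K g A θ t c) b) *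
          g (A (t + 1)) (t + 1)

/-- The `Gradient Bandit` action probabilities: `π_1` is uniform and
`π_{t+1} = softmax(−(θ/√n) Σ_{s≤t} ĝ_{·,s})`. -/
noncomputable def gradBanditPi (n K : ℕ) (g : Fin K → ℕ → ℝ) (A : ℕ → Fin K)
    (θ : ℝ) (t : ℕ) : Fin K → ℝ :=
  softmax (fun c => -(θ / Real.sqrt n) * gradBanditG n K g A θ (t - 1) c)

section aux

variable {ι : Type*} [Fintype ι] [Nonempty ι]

lemma aux_sum_exp_pos (h : ι → ℝ) : 0 < ∑ b, Real.exp (h b) :=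
  Finset.sum_pos (fun b _ => Real.exp_pos _) Finset.univ_nonempty

lemma aux_softmax_pos (h : ι → ℝ) (a : ι) : 0 < softmax h a :=
  div_pos (Real.exp_pos _) (aux_sum_exp_pos h)

lemma aux_softmax_le_one (h : ι → ℝ) (a : ι) : softmax h a ≤ 1 := by
  rw [softmax, div_le_one (aux_sum_exp_pos h)]
  exact Finset.single_le_sum (fun b _ => (Real.exp_pos (h b)).le) (Finset.mem_univ a)

lemma aux_log_sum_le (h h' : ι → ℝ) (cc : ℝ) (hc : ∀ b, h' b - h b ≤ cc) :
    Real.log (∑ b, Real.exp (h' b)) ≤ cc + Real.log (∑ b, Real.exp (h b)) := by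
  have key : ∑ b, Real.exp (h' b) ≤ Real.exp cc * ∑ b, Real.exp (h b) := by
    rw [Finset.mul_sum]
    exact Finset.sum_le_sum fun b _ => by
      rw [← Real.exp_add]; exact Real.exp_le_exp.mpr (by linarith [hc b])
  calc Real.log (∑ b, Real.exp (h' b))
      ≤ Real.log (Real.exp cc * ∑ b, Real.exp (h b)) :=
        Real.log_le_log (aux_sum_exp_pos h') key
    _ = cc + Real.log (∑ b, Real.exp (h b)) := by
        rw [Real.log_mul (Real.exp_ne_zero cc) (aux_sum_exp_pos h).ne', Real.log_exp]

lemma aux_log_softmax (h : ι → ℝ) (a : ι) :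
    Real.log (softmax h a) = h a - Real.log (∑ b, Real.exp (h b)) := by
  rw [softmax, Real.log_div (Real.exp_ne_zero _) (aux_sum_exp_pos h).ne', Real.log_exp]

lemma aux_abs_log_ratio (h h' : ι → ℝ) (a : ι) (cc : ℝ)
    (hc : ∀ b, |h' b - h b| ≤ cc) :
    |Real.log (softmax h' a / softmax h a)| ≤ 2 * cc := by
  rw [Real.log_div (aux_softmax_pos h' a).ne' (aux_softmax_pos h a).ne',
    aux_log_softmax, aux_log_softmax]
  have h1 := abs_le.mp (hc a)
  have h2 : Real.log (∑ b, Real.exp (h' b)) ≤ cc + Real.log (∑ b, Real.exp (h b)) :=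
    aux_log_sum_le h h' cc (fun b => (abs_le.mp (hc b)).2)
  have h3 : Real.log (∑ b, Real.exp (h b)) ≤ cc + Real.log (∑ b, Real.exp (h' b)) :=
    aux_log_sum_le h' h cc (fun b => by have := (abs_le.mp (hc b)).1; linarith)
  rw [abs_le]
  constructor <;> [linarith [h1.1]; linarith [h1.2]]

lemma aux_sub_le_log {p q : ℝ} (hp : 0 < p) (hpq : p ≤ q) (hq1 : q ≤ 1) :
    q - p ≤ Real.log q - Real.log p := by
  have hq : 0 < q := lt_of_lt_of_le hp hpq
  set t := Real.log q - Real.log p with hT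
  have ht : 0 ≤ t := by
    have := Real.log_le_log hp hpq; simp only [hT]; linarith
  have hexp : Real.exp (-t) = p / q := by
    rw [hT, neg_sub, Real.exp_sub, Real.exp_log hp, Real.exp_log hq]
  have h1 : -t + 1 ≤ p / q := by rw [← hexp]; exact Real.add_one_le_exp _
  have h3 : q * (1 - p / q) = q - p := by field_simp
  nlinarith [mul_le_mul_of_nonneg_left (by linarith : 1 - p / q ≤ t) hq.le,
    mul_nonneg ht (by linarith : (0:ℝ) ≤ 1 - q)]

lemma aux_abs_sub_le_abs_log {p q : ℝ} (hp : 0 < p) (hp1 : p ≤ 1)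
    (hq : 0 < q) (hq1 : q ≤ 1) : |q - p| ≤ |Real.log (q / p)| := by
  rw [Real.log_div hq.ne' hp.ne']
  rcases le_total p q with hle | hle
  · have h1 := aux_sub_le_log hp hle hq1
    have h2 := Real.log_le_log hp hle
    rw [abs_of_nonneg (by linarith), abs_of_nonneg (by linarith)]
    exact h1
  · have h1 := aux_sub_le_log hq hle hp1
    have h2 := Real.log_le_log hq hle
    rw [abs_of_nonpos (by linarith), abs_of_nonpos (by linarith)]
    linarith

lemma aux_abs_softmax_sub (h h' : ι → ℝ) (a : ι) (cc : ℝ)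
    (hc : ∀ b, |h' b - h b| ≤ cc) :
    |softmax h' a - softmax h a| ≤ 2 * cc :=
  le_trans
    (aux_abs_sub_le_abs_log (aux_softmax_pos h a) (aux_softmax_le_one h a)
      (aux_softmax_pos h' a) (aux_softmax_le_one h' a))
    (aux_abs_log_ratio h h' a cc hc)

end aux

set_option maxHeartbeats 1000000 in
lemma gradBandit_key (n K : ℕ) (hn : 1 ≤ n) (hK : 2 ≤ K)
    (g : Fin K → ℕ → ℝ) (hg : ∀ a t, g a t ∈ Set.Icc (0 : ℝ) 1)
    (A : ℕ → Fin K) (R θ δ : ℝ) (hR : 0 < R)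
    (hθ : θ ∈ Set.Icc 0 R) (hδ : δ ∈ Set.Icc 0 R) (s : ℕ) :
    ∀ b, |δ * gradBanditG n K g A δ s b - θ * gradBanditG n K g A θ s b| ≤
      |δ - θ| * Real.sqrt n / (2 * R) * ((1 + 2 * R / Real.sqrt n) ^ s - 1) := by
  haveI : Nonempty (Fin K) := ⟨⟨0, by omega⟩⟩
  have hsn : (0:ℝ) < Real.sqrt n := Real.sqrt_pos.mpr (by exact_mod_cast hn)
  have hd : (0:ℝ) ≤ |δ - θ| := abs_nonneg _
  have hcpos : (0:ℝ) < 2 * R / Real.sqrt n := by positivity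
  induction s with
  | zero => intro b; simp [gradBanditG]
  | succ s ih =>
    intro b
    have hBnn : 0 ≤ |δ - θ| * Real.sqrt n / (2 * R) * ((1 + 2 * R / Real.sqrt n) ^ s - 1) := by
      have h1 : (1:ℝ) ≤ (1 + 2 * R / Real.sqrt n) ^ s :=
        one_le_pow₀ (by linarith)
      have h2 : (0:ℝ) ≤ |δ - θ| * Real.sqrt n / (2 * R) := by positivity
      nlinarith
    set B := |δ - θ| * Real.sqrt n / (2 * R) * ((1 + 2 * R / Real.sqrt n) ^ s - 1) with hB
    have hscore : ∀ x : Fin K,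
        |(-(δ / Real.sqrt n) * gradBanditG n K g A δ s x) -
          (-(θ / Real.sqrt n) * gradBanditG n K g A θ s x)| ≤ B / Real.sqrt n := by
      intro x
      have heq : -(δ / Real.sqrt n) * gradBanditG n K g A δ s x -
          -(θ / Real.sqrt n) * gradBanditG n K g A θ s x =
          -((δ * gradBanditG n K g A δ s x - θ * gradBanditG n K g A θ s x) / Real.sqrt n) := by
        ring
      rw [heq, abs_neg, abs_div, abs_of_pos hsn]
      exact div_le_div_of_nonneg_right (ih x) hsn.le
    set πδ := softmax (fun c => -(δ / Real.sqrt n) * gradBanditG n K g A δ s c) b with hπδ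
    set πθ := softmax (fun c => -(θ / Real.sqrt n) * gradBanditG n K g A θ s c) b with hπθ
    have hpidiff : |πθ - πδ| ≤ 2 * (B / Real.sqrt n) := by
      rw [abs_sub_comm]
      exact aux_abs_softmax_sub _ _ b _ hscore
    have hπδpos : 0 < πδ := aux_softmax_pos _ b
    have hπδle : πδ ≤ 1 := aux_softmax_le_one _ b
    set ind : ℝ := if A (s + 1) = b then 1 else 0 with hind
    have hindb : |ind - πδ| ≤ 1 := by
      rcases ite_eq_or_eq (A (s + 1) = b) (1:ℝ) 0 with h | h <;>
        rw [hind, h, abs_le] <;> constructor <;> linarith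
    have hgb := hg (A (s + 1)) (s + 1)
    have hgabs : |g (A (s + 1)) (s + 1)| ≤ 1 := by
      rw [abs_le]; exact ⟨by linarith [hgb.1], hgb.2⟩
    have hsplit : δ * gradBanditG n K g A δ (s + 1) b - θ * gradBanditG n K g A θ (s + 1) b =
        (δ * gradBanditG n K g A δ s b - θ * gradBanditG n K g A θ s b) +
          ((δ - θ) * (ind - πδ) + θ * (πθ - πδ)) * g (A (s + 1)) (s + 1) := by
      show δ * (gradBanditG n K g A δ s b + (ind - πδ) * g (A (s + 1)) (s + 1)) -
          θ * (gradBanditG n K g A θ s b + (ind - πθ) * g (A (s + 1)) (s + 1)) = _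
      ring
    have hθR : |θ| ≤ R := by rw [abs_of_nonneg hθ.1]; exact hθ.2
    have step : |δ * gradBanditG n K g A δ (s + 1) b - θ * gradBanditG n K g A θ (s + 1) b| ≤
        B + (|δ - θ| + R * (2 * (B / Real.sqrt n))) := by
      rw [hsplit]
      refine le_trans (abs_add_le _ _) ?_
      have h1 : |((δ - θ) * (ind - πδ) + θ * (πθ - πδ)) * g (A (s + 1)) (s + 1)| ≤
          |δ - θ| + R * (2 * (B / Real.sqrt n)) := by
        rw [abs_mul]
        have h2 : |(δ - θ) * (ind - πδ) + θ * (πθ - πδ)| ≤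
            |δ - θ| + R * (2 * (B / Real.sqrt n)) := by
          refine le_trans (abs_add_le _ _) ?_
          rw [abs_mul, abs_mul]
          have e1 : |δ - θ| * |ind - πδ| ≤ |δ - θ| * 1 :=
            mul_le_mul_of_nonneg_left hindb hd
          have e2 : |θ| * |πθ - πδ| ≤ R * (2 * (B / Real.sqrt n)) :=
            mul_le_mul hθR hpidiff (abs_nonneg _) hR.le
          linarith
        have h3 : 0 ≤ |(δ - θ) * (ind - πδ) + θ * (πθ - πδ)| := abs_nonneg _
        nlinarith
      linarith [ih b]
    have hRHS : |δ - θ| * Real.sqrt n / (2 * R) * ((1 + 2 * R / Real.sqrt n) ^ (s + 1) - 1) =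
        B + (|δ - θ| + R * (2 * (B / Real.sqrt n))) := by
      rw [hB]
      have := hsn.ne'
      have := hR.ne'
      rw [pow_succ]
      field_simp
      ring
    linarith [step, hRHS.ge]

set_option maxHeartbeats 1000000 in
/-- Lipschitz parameterization of `Gradient Bandit`. For `ε ∈ (0, 1)`,
`T_ε = min(⌊log(√(1/(Kε))) √n / R⌋, n)` and
`L_ε = (√2/(Rε)) log(√(1/(Kε)))/√(Kε)`, for all parameters `θ, δ ∈ [0, R]` and all
`1 ≤ t ≤ T_ε`, `sup_a |log(π_t^δ(a)/π_t^θ(a))| ≤ L_ε |δ − θ|`. -/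
theorem gradBandit_lipschitz (n K : ℕ) (hn : 1 ≤ n) (hK : 2 ≤ K)
    (g : Fin K → ℕ → ℝ) (hg : ∀ a t, g a t ∈ Set.Icc (0 : ℝ) 1)
    (A : ℕ → Fin K) (ε R : ℝ) (hε : 0 < ε) (hε1 : ε < 1) (hR : 0 < R)
    (Tε : ℕ)
    (hTε : Tε = min ⌊Real.log (Real.sqrt (1 / (K * ε))) * Real.sqrt n / R⌋₊ n)
    (Lε : ℝ)
    (hLε : Lε = Real.sqrt 2 / (R * ε) *
      (Real.log (Real.sqrt (1 / (K * ε))) / Real.sqrt (K * ε))) :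
    ∀ θ δ : ℝ, θ ∈ Set.Icc 0 R → δ ∈ Set.Icc 0 R →
      ∀ t, 1 ≤ t → t ≤ Tε → ∀ a,
        |Real.log (gradBanditPi n K g A δ t a / gradBanditPi n K g A θ t a)| ≤
          Lε * |δ - θ| := by
  intro θ δ hθ hδ t ht1 htT a
  haveI : Nonempty (Fin K) := ⟨⟨0, by omega⟩⟩
  have hsn : (0:ℝ) < Real.sqrt n := Real.sqrt_pos.mpr (by exact_mod_cast hn)
  set x : ℝ := (K : ℝ) * ε with hx
  have hx0 : 0 < x := by
    have : (0:ℝ) < (K:ℝ) := by exact_mod_cast (by omega : 0 < K)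
    positivity
  set M : ℝ := Real.log (Real.sqrt (1 / x)) with hM
  -- degenerate case x ≥ 1
  by_cases hx1 : 1 ≤ x
  · exfalso
    have h1 : Real.sqrt (1 / x) ≤ 1 := Real.sqrt_le_one.mpr (by
      rw [div_le_one hx0]; linarith)
    have hM0 : M ≤ 0 := Real.log_nonpos (by positivity) h1
    have h2 : M * Real.sqrt n / R ≤ 0 := by
      apply div_nonpos_of_nonpos_of_nonneg _ hR.le
      exact mul_nonpos_of_nonpos_of_nonneg hM0 hsn.le
    have h3 : ⌊M * Real.sqrt n / R⌋₊ = 0 := Nat.floor_eq_zero.mpr (by linarith)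
    rw [hTε, h3] at htT
    simp at htT
    omega
  push_neg at hx1
  have hix : 1 < 1 / x := by rw [lt_div_iff₀ hx0]; linarith
  have hM0 : 0 ≤ M := Real.log_nonneg (Real.one_le_sqrt.mpr hix.le)
  -- t ≤ M √n / R
  have htle : (t : ℝ) ≤ M * Real.sqrt n / R := by
    have h1 : t ≤ ⌊M * Real.sqrt n / R⌋₊ := le_trans htT (by rw [hTε]; exact min_le_left _ _)
    have h2 : (0:ℝ) ≤ M * Real.sqrt n / R := by positivity
    calc (t : ℝ) ≤ (⌊M * Real.sqrt n / R⌋₊ : ℝ) := by exact_mod_cast h1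
      _ ≤ M * Real.sqrt n / R := Nat.floor_le h2
  set d := |δ - θ| with hdd
  have hd : 0 ≤ d := abs_nonneg _
  set s := t - 1 with hs
  set B := d * Real.sqrt n / (2 * R) * ((1 + 2 * R / Real.sqrt n) ^ s - 1) with hB
  have hkey := gradBandit_key n K hn hK g hg A R θ δ hR hθ hδ s
  have hscore : ∀ b : Fin K,
      |(fun c => -(δ / Real.sqrt n) * gradBanditG n K g A δ s c) b -
        (fun c => -(θ / Real.sqrt n) * gradBanditG n K g A θ s c) b| ≤ B / Real.sqrt n := by
    intro b
    simp only
    have heq : -(δ / Real.sqrt n) * gradBanditG n K g A δ s b -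
        -(θ / Real.sqrt n) * gradBanditG n K g A θ s b =
        -((δ * gradBanditG n K g A δ s b - θ * gradBanditG n K g A θ s b) / Real.sqrt n) := by
      ring
    rw [heq, abs_neg, abs_div, abs_of_pos hsn]
    exact div_le_div_of_nonneg_right (hkey b) hsn.le
  have hlog : |Real.log (gradBanditPi n K g A δ t a / gradBanditPi n K g A θ t a)| ≤
      2 * (B / Real.sqrt n) := by
    rw [gradBanditPi, gradBanditPi, ← hs]
    exact aux_abs_log_ratio _ _ a _ hscore
  -- bound 2 * (B / √n)
  have hc : (0:ℝ) < 2 * R / Real.sqrt n := by positivity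
  have hpow : (1 + 2 * R / Real.sqrt n) ^ s ≤ 1 / x := by
    have h1 : (1 + 2 * R / Real.sqrt n) ^ s ≤ Real.exp (2 * R / Real.sqrt n) ^ s :=
      pow_le_pow_left₀ (by linarith) (by linarith [Real.add_one_le_exp (2 * R / Real.sqrt n)]) s
    have h2 : Real.exp (2 * R / Real.sqrt n) ^ s = Real.exp ((s : ℝ) * (2 * R / Real.sqrt n)) :=
      (Real.exp_nat_mul _ s).symm
    have h3 : (s : ℝ) * (2 * R / Real.sqrt n) ≤ 2 * M := by
      have hst : (s : ℝ) ≤ (t : ℝ) := by exact_mod_cast Nat.sub_le t 1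
      have h4 : (s : ℝ) ≤ M * Real.sqrt n / R := le_trans hst htle
      rw [le_div_iff₀ hR] at h4
      have heq2 : (s : ℝ) * (2 * R / Real.sqrt n) = 2 * ((s:ℝ) * R) / Real.sqrt n := by ring
      rw [heq2, div_le_iff₀ hsn]
      nlinarith
    have h5 : Real.exp (2 * M) = 1 / x := by
      rw [two_mul, Real.exp_add, hM, Real.exp_log (by positivity),
        Real.mul_self_sqrt (by positivity)]
    calc (1 + 2 * R / Real.sqrt n) ^ s ≤ Real.exp ((s : ℝ) * (2 * R / Real.sqrt n)) := by
          rw [← h2]; exact h1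
      _ ≤ Real.exp (2 * M) := Real.exp_le_exp.mpr h3
      _ = 1 / x := h5
  have hBle : 2 * (B / Real.sqrt n) ≤ d / R * (1 / x - 1) := by
    rw [hB]
    have : d * Real.sqrt n / (2 * R) * ((1 + 2 * R / Real.sqrt n) ^ s - 1) / Real.sqrt n * 2
        = d / R * ((1 + 2 * R / Real.sqrt n) ^ s - 1) := by
      field_simp
    have hmono : d / R * ((1 + 2 * R / Real.sqrt n) ^ s - 1) ≤ d / R * (1 / x - 1) := by
      apply mul_le_mul_of_nonneg_left _ (by positivity)
      linarith
    calc 2 * (d * Real.sqrt n / (2 * R) * ((1 + 2 * R / Real.sqrt n) ^ s - 1) / Real.sqrt n)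
        = d / R * ((1 + 2 * R / Real.sqrt n) ^ s - 1) := by rw [← this]; ring
      _ ≤ d / R * (1 / x - 1) := hmono
  -- final elementary inequality : (1/x - 1)/R ≤ Lε
  have hfin : (1 / x - 1) / R ≤ Lε := by
    rw [hLε]
    have hMx : M = (-Real.log x) / 2 := by
      rw [hM, Real.log_sqrt (by positivity), one_div, Real.log_inv]
    rw [hMx]
    have hsx : 0 < Real.sqrt x := Real.sqrt_pos.mpr hx0
    have hsx1 : Real.sqrt x ≤ 1 := Real.sqrt_le_one.mpr hx1.le
    have hsxx : Real.sqrt x * Real.sqrt x = x := Real.mul_self_sqrt hx0.le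
    have hlogx : Real.log x ≤ x - 1 := Real.log_le_sub_one_of_pos hx0
    have hlogneg : Real.log x ≤ 0 := Real.log_nonpos hx0.le hx1.le
    have h2e : 2 * ε ≤ x := by
      rw [hx]
      have : (2:ℝ) ≤ (K:ℝ) := by exact_mod_cast hK
      nlinarith
    have hs2 : (1:ℝ) ≤ Real.sqrt 2 := Real.one_le_sqrt.mpr one_le_two
    have hR2 : Real.sqrt 2 / (R * ε) * ((-Real.log x / 2) / Real.sqrt x) =
        (Real.sqrt 2 * (-Real.log x)) / (2 * R * ε * Real.sqrt x) := by
      field_simp [hR.ne', hε.ne', hsx.ne']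
    have hL : (1 / x - 1) / R = (1 - x) / (x * R) := by
      field_simp [hx0.ne', hR.ne']
    rw [hL, hR2, div_le_div_iff₀ (by positivity) (by positivity)]
    have key : Real.sqrt x * (1 - x) ≤ Real.sqrt 2 * (-Real.log x) := by
      have h1 : Real.sqrt x * (1 - x) ≤ 1 * (1 - x) :=
        mul_le_mul_of_nonneg_right hsx1 (by linarith)
      have h2 : (1:ℝ) * (1 - x) ≤ -Real.log x := by linarith
      have h3 : -Real.log x ≤ Real.sqrt 2 * (-Real.log x) := by nlinarith
      linarith
    nlinarith [mul_le_mul_of_nonneg_right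
        (mul_le_mul_of_nonneg_left h2e (by linarith : (0:ℝ) ≤ 1 - x))
        (by positivity : (0:ℝ) ≤ R * Real.sqrt x),
      mul_le_mul_of_nonneg_right key (by positivity : (0:ℝ) ≤ x * R)]
  have : d / R * (1 / x - 1) ≤ Lε * d := by
    calc d / R * (1 / x - 1) = (1 / x - 1) / R * d := by ring
      _ ≤ Lε * d := mul_le_mul_of_nonneg_right hfin hd
  linarith
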